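/- Let F be the oriented graph on four vertices v_1, v_2, v_3, v_4 with arcs v_1→v_2, v_2→v_3, v_3→v_4 and v_1→v_4 (an orientation of the 4-cycle). Then for every n, exo(n, F) = e(T(n, 3)), the number of edges of the Turán graph T(n, 3). -/

import Mathlib

/-- An oriented graph `G` contains a copy of the oriented graph `F`. -/
def Copies {α β : Type*} (F : α → α → Prop) (G : β → β → Prop) : Prop :=
  ∃ f : α → β, Function.Injective f ∧ ∀ a b, F a b → G (f a) (f b)

/-- The oriented Turán number. -/
noncomputable def exo {α : Type*} (n : ℕ) (F : α → α → Prop) : ℕ :=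
  sSup {m : ℕ | ∃ G : Fin n → Fin n → Prop,
    (∀ v, ¬ G v v) ∧ (∀ u v, G u v → ¬ G v u) ∧
    ¬ Copies F G ∧ {p : Fin n × Fin n | G p.1 p.2}.ncard = m}

/-- The number of edges of the Turán graph `T(n,k)`. -/
noncomputable def eTuran (n k : ℕ) : ℕ := (SimpleGraph.turanGraph n k).edgeSet.ncard

/-- The orientation of `C₄` with arcs `v₁→v₂, v₂→v₃, v₃→v₄, v₁→v₄`. -/
def orientedC4 (i j : Fin 4) : Prop :=
  (i = 0 ∧ j = 1) ∨ (i = 1 ∧ j = 2) ∨ (i = 2 ∧ j = 3) ∨ (i = 0 ∧ j = 3)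

instance : DecidableRel orientedC4 := fun i j => by unfold orientedC4; infer_instance

/-- A template tournament on `Fin 4` from six direction bits. -/
def mkT (b01 b02 b03 b12 b13 b23 : Bool) : Fin 4 → Fin 4 → Bool := fun i j =>
  if i = 0 then (if j = 1 then b01 else if j = 2 then b02 else if j = 3 then b03 else false)
  else if i = 1 then (if j = 0 then !b01 else if j = 2 then b12 else if j = 3 then b13 else false)
  else if i = 2 then (if j = 0 then !b02 else if j = 1 then !b12 else if j = 3 then b23 else false)
  else (if j = 0 then !b03 else if j = 1 then !b13 else if j = 2 then !b23 else false)

set_option maxRecDepth 20000 in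
/-- Every tournament on four vertices contains a copy of `orientedC4`. -/
lemma tourn : ∀ b01 b02 b03 b12 b13 b23 : Bool, ∃ g : Fin 4 → Fin 4, Function.Injective g ∧
    ∀ a b, orientedC4 a b → mkT b01 b02 b03 b12 b13 b23 (g a) (g b) = true := by
  decide

lemma turan_adj (n : ℕ) (u v : Fin n) :
    (SimpleGraph.turanGraph n 3).Adj u v ↔ (u : ℕ) % 3 ≠ (v : ℕ) % 3 := by
  simp [SimpleGraph.turanGraph]

lemma arc_card {n : ℕ} (G : Fin n → Fin n → Prop) (ha : ∀ u v, G u v → ¬ G v u) :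
    {p : Fin n × Fin n | G p.1 p.2}.ncard = ((fun p : Fin n × Fin n => Sym2.mk p.1 p.2) '' {p : Fin n × Fin n | G p.1 p.2}).ncard := by
  refine (Set.ncard_image_of_injOn ?_).symm
  rintro ⟨a, b⟩ hp ⟨c, d⟩ hq h
  replace h : (a, b) = (c, d) ∨ (a, b) = (c, d).swap := Sym2.mk_eq_mk_iff.mp h
  rcases h with h | h
  · exact h
  · simp only [Prod.swap] at h
    cases h
    exact absurd hq (ha a b hp)

/-- The cyclic orientation of the tripartite Turán graph. -/
def cyc3 {n : ℕ} (u v : Fin n) : Prop := ((u : ℕ) % 3 + 1) % 3 = (v : ℕ) % 3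

theorem upper_bound {n : ℕ} (G : Fin n → Fin n → Prop) (hi : ∀ v, ¬ G v v)
    (ha : ∀ u v, G u v → ¬ G v u) (hF : ¬ Copies orientedC4 G) :
    {p : Fin n × Fin n | G p.1 p.2}.ncard ≤ eTuran n 3 := by
  classical
  set H : SimpleGraph (Fin n) :=
    { Adj := fun u v => G u v ∨ G v u
      symm := ⟨fun u v h => Or.symm h⟩
      loopless := ⟨fun v h => by cases h <;> exact hi v ‹_›⟩ } with hH
  have hcf : H.CliqueFree 4 := by
    rw [SimpleGraph.cliqueFree_iff]
    by_contra hc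
    rw [not_isEmpty_iff] at hc
    obtain ⟨e⟩ := hc
    have adj : ∀ i j : Fin 4, i ≠ j → G (e i) (e j) ∨ G (e j) (e i) := by
      intro i j hij
      have : H.Adj (e i) (e j) := e.toHom.map_adj (by simpa using hij)
      exact this
    have pick : ∀ u v : Fin n, (G u v ∨ G v u) →
        ∃ b : Bool, (b = true → G u v) ∧ (b = false → G v u) := by
      intro u v h
      cases h with
      | inl h => exact ⟨true, fun _ => h, by simp⟩
      | inr h => exact ⟨false, by simp, fun _ => h⟩
    obtain ⟨b01, h01, h01'⟩ := pick _ _ (adj 0 1 (by decide))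
    obtain ⟨b02, h02, h02'⟩ := pick _ _ (adj 0 2 (by decide))
    obtain ⟨b03, h03, h03'⟩ := pick _ _ (adj 0 3 (by decide))
    obtain ⟨b12, h12, h12'⟩ := pick _ _ (adj 1 2 (by decide))
    obtain ⟨b13, h13, h13'⟩ := pick _ _ (adj 1 3 (by decide))
    obtain ⟨b23, h23, h23'⟩ := pick _ _ (adj 2 3 (by decide))
    have bridge : ∀ i j : Fin 4, mkT b01 b02 b03 b12 b13 b23 i j = true → G (e i) (e j) := by
      intro i j h
      fin_cases i <;> fin_cases j <;> simp [mkT, Fin.ext_iff, show ((3:Fin 4):ℕ) = 3 from rfl] at h <;>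
        first
          | exact h01 h | exact h02 h | exact h03 h
          | exact h12 h | exact h13 h | exact h23 h
          | exact h01' h | exact h02' h | exact h03' h
          | exact h12' h | exact h13' h | exact h23' h
    obtain ⟨g, hg, harcs⟩ := tourn b01 b02 b03 b12 b13 b23
    exact hF ⟨(e : Fin 4 → Fin n) ∘ g, e.injective.comp hg,
      fun a b hab => bridge (g a) (g b) (harcs a b hab)⟩
  have hsub : (fun p : Fin n × Fin n => Sym2.mk p.1 p.2) '' {p : Fin n × Fin n | G p.1 p.2} ⊆ H.edgeSet := by
    rintro _ ⟨⟨u, v⟩, h, rfl⟩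
    exact Or.inl h
  calc {p : Fin n × Fin n | G p.1 p.2}.ncard
      = ((fun p : Fin n × Fin n => Sym2.mk p.1 p.2) '' {p : Fin n × Fin n | G p.1 p.2}).ncard := arc_card G ha
    _ ≤ H.edgeSet.ncard := Set.ncard_le_ncard hsub (Set.toFinite _)
    _ = H.edgeFinset.card := by rw [← SimpleGraph.coe_edgeFinset, Set.ncard_coe_finset]
    _ ≤ (SimpleGraph.turanGraph n 3).edgeFinset.card :=
        (SimpleGraph.isTuranMaximal_turanGraph (by norm_num)).2 hcf
    _ = eTuran n 3 := by rw [eTuran, ← SimpleGraph.coe_edgeFinset, Set.ncard_coe_finset]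

theorem lower_bound {n : ℕ} :
    ∃ G : Fin n → Fin n → Prop, (∀ v, ¬ G v v) ∧ (∀ u v, G u v → ¬ G v u) ∧
      ¬ Copies orientedC4 G ∧ {p : Fin n × Fin n | G p.1 p.2}.ncard = eTuran n 3 := by
  have hasym : ∀ u v : Fin n, cyc3 u v → ¬ cyc3 v u := by
    intro u v h h'; simp only [cyc3] at h h'; omega
  refine ⟨cyc3, fun v h => by simp only [cyc3] at h; omega, hasym, ?_, ?_⟩
  · rintro ⟨f, hinj, hf⟩
    have h1 := hf 0 1 (Or.inl ⟨rfl, rfl⟩)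
    have h2 := hf 1 2 (Or.inr (Or.inl ⟨rfl, rfl⟩))
    have h3 := hf 2 3 (Or.inr (Or.inr (Or.inl ⟨rfl, rfl⟩)))
    have h4 := hf 0 3 (Or.inr (Or.inr (Or.inr ⟨rfl, rfl⟩)))
    simp only [cyc3] at h1 h2 h3 h4
    omega
  · have himg : (fun p : Fin n × Fin n => Sym2.mk p.1 p.2) '' {p : Fin n × Fin n | cyc3 p.1 p.2}
        = (SimpleGraph.turanGraph n 3).edgeSet := by
      apply Set.Subset.antisymm
      · rintro _ ⟨⟨u, v⟩, h, rfl⟩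
        rw [SimpleGraph.mem_edgeSet, turan_adj]
        simp only [Set.mem_setOf_eq, cyc3] at h
        dsimp only
        omega
      · intro e he
        induction e using Sym2.ind with
        | _ u v =>
          rw [SimpleGraph.mem_edgeSet, turan_adj] at he
          have : cyc3 u v ∨ cyc3 v u := by simp only [cyc3]; omega
          rcases this with h | h
          · exact ⟨(u, v), h, rfl⟩
          · exact ⟨(v, u), h, Sym2.eq_swap⟩
    rw [arc_card cyc3 hasym, himg, eTuran]

/-- for this orientation of the 4-cycle, `exo(n, F) = e(T(n,3))`. -/
theorem stmt_5 (n : ℕ) : exo n orientedC4 = eTuran n 3 := by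
  refine IsGreatest.csSup_eq ⟨lower_bound, ?_⟩
  rintro m ⟨G, hi, ha, hF, rfl⟩
  exact upper_bound G hi ha hF
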